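/- Let I be an index set, for each i ∈ I let R_i be a commutative local ring, and set R = ∏_{i∈I} R_i. Let M be a finitely generated projective R-module of constant rank, i.e., there exists a natural number n such that for every prime ideal p of R the dimension of the κ(p)-vector space M ⊗_R κ(p) equals n, where κ(p) is the residue field at p. Then M is a free R-module. -/

import Mathlib

open TensorProduct

set_option maxHeartbeats 1000000
set_option synthInstance.maxHeartbeats 400000

section Aux

variable {I : Type} (R : I → Type) [∀ i, CommRing (R i)]

/-- Each factor `R i` is an algebra over the product ring via evaluation. -/
noncomputable def piEvalAlgebra (i : I) : Algebra (∀ j, R j) (R i) :=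
  (Pi.evalRingHom R i).toAlgebra

attribute [local instance] piEvalAlgebra

lemma piEval_smul_def {i : I} (s : ∀ j, R j) (a : R i) : s • a = s i * a := by
  rw [Algebra.smul_def]; rfl

variable (N : Type) [AddCommGroup N] [Module (∀ i, R i) N]

/-- The canonical map from a module to the product of its base changes. -/
noncomputable def piPhi : N →ₗ[∀ i, R i] ∀ i, (R i) ⊗[∀ j, R j] N :=
  LinearMap.pi fun i => TensorProduct.mk _ (R i) N 1

lemma piPhi_apply (x : N) (i : I) : piPhi R N x i = 1 ⊗ₜ x := rfl

lemma piPhi_free_bijective (k : ℕ) :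
    Function.Bijective (piPhi R (Fin k → ∀ j, R j)) := by
  set S := ∀ j, R j
  let β : ∀ i, (R i) ⊗[S] (Fin k → S) ≃ₗ[R i] (Fin k → R i) :=
    fun i => TensorProduct.piScalarRight S (R i) (R i) (Fin k)
  have hβ : ∀ (i : I) (a : R i) (f : Fin k → S),
      β i (a ⊗ₜ f) = fun j => f j i * a := by
    intro i a f
    funext j
    simp only [β, TensorProduct.piScalarRight_apply, TensorProduct.piScalarRightHom_tmul]
    exact piEval_smul_def R (f j) a
  refine Function.bijective_iff_has_inverse.mpr
    ⟨fun y j i => β i (y i) j, fun x => ?_, fun y => ?_⟩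
  · funext j i
    exact (congrFun (hβ i 1 x) j).trans (mul_one _)
  · funext i
    apply (β i).injective
    rw [piPhi_apply, hβ]
    funext j
    simp [piEval_smul_def]

variable [Module.Finite (∀ i, R i) N] [Module.Projective (∀ i, R i) N]

lemma piPhi_bijective : Function.Bijective (piPhi R N) := by
  set S := ∀ j, R j
  obtain ⟨k, f, hf⟩ := Module.Finite.exists_fin' S N
  obtain ⟨s, hs⟩ := Module.projective_lifting_property f LinearMap.id hf
  constructor
  · rw [injective_iff_map_eq_zero]
    intro m hm
    have h1 : piPhi R (Fin k → S) (s m) = 0 := by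
      funext i
      have : (1 : R i) ⊗ₜ[S] m = (0 : (R i) ⊗[S] N) := congrFun hm i
      calc piPhi R (Fin k → S) (s m) i = (s.baseChange (R i)) (1 ⊗ₜ m) := by
            rw [piPhi_apply, LinearMap.baseChange_tmul]
        _ = 0 := by rw [this, map_zero]
    have h2 : s m = 0 := by
      have := (piPhi_free_bijective R k).injective
      apply this
      rw [h1, map_zero]
    have : f (s m) = m := by
      have := congrArg (fun g => g m) hs
      simpa using this
    rw [← this, h2, map_zero]
  · intro y
    obtain ⟨x, hx⟩ := (piPhi_free_bijective R k).surjective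
      (fun i => (s.baseChange (R i)) (y i))
    refine ⟨f x, ?_⟩
    funext i
    have hx' : (1 : R i) ⊗ₜ[S] x = (s.baseChange (R i)) (y i) := by
      have := congrFun hx i
      rwa [piPhi_apply] at this
    calc piPhi R N (f x) i = (f.baseChange (R i)) (1 ⊗ₜ x) := by
          rw [piPhi_apply, LinearMap.baseChange_tmul]
      _ = (f.baseChange (R i)) ((s.baseChange (R i)) (y i)) := by rw [hx']
      _ = ((f.comp s).baseChange (R i)) (y i) := by
          rw [LinearMap.baseChange_comp]; rfl
      _ = y i := by rw [hs, LinearMap.baseChange_id]; rfl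

variable [∀ i, IsLocalRing (R i)]

open IsLocalRing in
lemma piFiber_finrank (i : I) (n : ℕ)
    (hrank : ∀ (p : Ideal (∀ i, R i)) (_ : p.IsPrime),
      Module.rank (IsLocalRing.ResidueField (Localization.AtPrime p))
        (IsLocalRing.ResidueField (Localization.AtPrime p) ⊗[∀ i, R i] N) = (n : Cardinal)) :
    Module.finrank (R i) ((R i) ⊗[∀ j, R j] N) = n := by
  classical
  set S := ∀ j, R j
  let κ := ResidueField (R i)
  let g : S →+* κ := (residue (R i)).comp (Pi.evalRingHom R i)
  have hg : Function.Surjective g :=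
    (residue_surjective).comp (Function.surjective_eval i)
  let p : Ideal S := RingHom.ker g
  haveI hp : p.IsPrime := RingHom.ker_isPrime g
  have hr := hrank p hp
  set L := Localization.AtPrime p
  -- the induced map from the localization to κ
  have hunits : ∀ y : p.primeCompl, IsUnit (g y) := by
    rintro ⟨y, hy⟩
    rw [isUnit_iff_ne_zero]
    intro h0
    exact hy (by simpa [p, RingHom.mem_ker] using h0)
  let f₀ : L →+* κ := IsLocalization.lift (M := p.primeCompl) hunits
  have hf₀alg : ∀ x : S, f₀ (algebraMap S L x) = g x := fun x =>
    IsLocalization.lift_eq hunits x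
  have hf₀surj : Function.Surjective f₀ := by
    intro y
    obtain ⟨x, hx⟩ := hg y
    exact ⟨algebraMap S L x, by rw [hf₀alg, hx]⟩
  have hker : RingHom.ker f₀ = maximalIdeal L := by
    apply le_antisymm
    · apply le_maximalIdeal
      intro h
      have : f₀ 1 = 0 := by
        rw [← RingHom.mem_ker, h]; trivial
      simp at this
    · rw [← Localization.AtPrime.map_eq_maximalIdeal]
      rw [Ideal.map_le_iff_le_comap]
      intro x hx
      simp only [Ideal.mem_comap, RingHom.mem_ker, hf₀alg]
      exact (hf₀alg x).trans (RingHom.mem_ker.mp hx)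
  let e : ResidueField L ≃+* κ :=
    (Ideal.quotEquivOfEq hker.symm).trans (RingHom.quotientKerEquivOfSurjective hf₀surj)
  have he : ∀ x : S, e (algebraMap S (ResidueField L) x) = g x := by
    intro x
    have h1 : algebraMap S (ResidueField L) x
        = Ideal.Quotient.mk (maximalIdeal L) (algebraMap S L x) := rfl
    rw [h1]
    simp only [e, RingEquiv.trans_apply, Ideal.quotEquivOfEq_mk,
      RingHom.quotientKerEquivOfSurjective, RingHom.quotientKerEquivOfRightInverse.apply,
      RingHom.kerLift_mk]
    exact hf₀alg x
  -- transfer rank across the residue field isomorphism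
  have heS : ∀ (x : S) (a : ResidueField L), e (x • a) = x • e a := by
    intro x a
    rw [Algebra.smul_def, map_mul, he, Algebra.smul_def]
    rfl
  let eLin : ResidueField L ≃ₗ[S] κ :=
    { e with map_smul' := heS }
  let J : (ResidueField L) ⊗[S] N ≃ₗ[S] κ ⊗[S] N :=
    TensorProduct.congr eLin (LinearEquiv.refl S N)
  have hJ : ∀ (c : ResidueField L) (x : (ResidueField L) ⊗[S] N),
      J (c • x) = e c • J x := by
    intro c x
    induction x using TensorProduct.induction_on with
    | zero => simp
    | tmul a m =>
      rw [TensorProduct.smul_tmul']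
      show (e (c * a)) ⊗ₜ m = e c • ((e a) ⊗ₜ m)
      rw [TensorProduct.smul_tmul', map_mul, smul_eq_mul]
    | add x y hx hy =>
      rw [smul_add, map_add, hx, hy, map_add, smul_add]
  have hrk : Module.rank κ (κ ⊗[S] N) = (n : Cardinal) := by
    rw [← hr]
    exact (rank_eq_of_equiv_equiv (⟨(e : ResidueField L → κ), map_zero e⟩ : ZeroHom _ _)
      J.toAddEquiv e.bijective hJ).symm
  -- cancel base change
  have hcancel : Module.rank κ (κ ⊗[R i] ((R i) ⊗[S] N)) = (n : Cardinal) := by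
    rw [← hrk]
    exact (TensorProduct.AlgebraTensorModule.cancelBaseChange S (R i) κ κ N).rank_eq
  -- the fiber module is finite free over the local ring `R i`
  haveI : Module.Finite (R i) ((R i) ⊗[S] N) := inferInstance
  haveI : Module.Projective (R i) ((R i) ⊗[S] N) := inferInstance
  haveI : Module.FinitePresentation (R i) ((R i) ⊗[S] N) :=
    Module.finitePresentation_of_projective _ _
  haveI : Module.Free (R i) ((R i) ⊗[S] N) := Module.free_of_flat_of_isLocalRing
  apply Module.finrank_eq_of_rank_eq
  have := Module.rank_baseChange (R := κ) (S := R i) (M' := (R i) ⊗[S] N)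
  rw [this, Cardinal.lift_id] at hcancel
  exact hcancel

open IsLocalRing in
theorem free_aux (n : ℕ)
    (hrank : ∀ (p : Ideal (∀ i, R i)) (_ : p.IsPrime),
      Module.rank (IsLocalRing.ResidueField (Localization.AtPrime p))
        (IsLocalRing.ResidueField (Localization.AtPrime p) ⊗[∀ i, R i] N) = (n : Cardinal)) :
    Module.Free (∀ i, R i) N := by
  classical
  set S := ∀ j, R j
  -- each fiber is free of rank n
  have hfree : ∀ i, Module.Free (R i) ((R i) ⊗[S] N) := by
    intro i
    haveI : Module.FinitePresentation (R i) ((R i) ⊗[S] N) :=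
      Module.finitePresentation_of_projective _ _
    exact Module.free_of_flat_of_isLocalRing
  have hfr : ∀ i, Module.finrank (R i) ((R i) ⊗[S] N) = n :=
    fun i => piFiber_finrank R N i n hrank
  -- choose bases
  let e : ∀ i, ((R i) ⊗[S] N) ≃ₗ[R i] (Fin n → R i) := fun i =>
    haveI := hfree i
    ((Module.finBasis (R i) ((R i) ⊗[S] N)).reindex (finCongr (hfr i))).equivFun
  -- assemble
  let E1 : N ≃ₗ[S] ∀ i, (R i) ⊗[S] N :=
    LinearEquiv.ofBijective (piPhi R N) (piPhi_bijective R N)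
  let E2 : (∀ i, (R i) ⊗[S] N) ≃ₗ[S] ∀ i, (Fin n → R i) :=
    LinearEquiv.piCongrRight fun i => (e i).restrictScalars S
  let F : (∀ i, Fin n → R i) →ₗ[S] (Fin n → S) :=
    LinearMap.pi fun j => LinearMap.pi fun i =>
      (LinearMap.proj (R := S) (φ := fun _ : Fin n => R i) j).comp
        (LinearMap.proj (R := S) (φ := fun i => Fin n → R i) i)
  let G : (Fin n → S) →ₗ[S] (∀ i, Fin n → R i) :=
    LinearMap.pi fun i => LinearMap.pi fun j =>
      (LinearMap.proj (R := S) (φ := R) i).comp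
        (LinearMap.proj (R := S) (φ := fun _ : Fin n => S) j)
  let E3 : (∀ i, Fin n → R i) ≃ₗ[S] (Fin n → S) :=
    LinearEquiv.ofLinear F G rfl rfl
  exact Module.Free.of_equiv (E1.trans (E2.trans E3)).symm

end Aux

/-- Let R = ∏ R_i be a product of commutative local rings. Then every finitely generated
projective R-module of constant rank (the residue-field fibers all have dimension n for
some fixed natural number n) is free. -/
theorem free_of_constant_rank_over_pi_local
    {I : Type} (R : I → Type) [∀ i, CommRing (R i)] [∀ i, IsLocalRing (R i)]
    (M : Type) [AddCommGroup M] [Module (∀ i, R i) M]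
    [Module.Finite (∀ i, R i) M] [Module.Projective (∀ i, R i) M]
    (n : ℕ)
    (hrank : ∀ (p : Ideal (∀ i, R i)) (_ : p.IsPrime),
      Module.rank (IsLocalRing.ResidueField (Localization.AtPrime p))
        (IsLocalRing.ResidueField (Localization.AtPrime p) ⊗[∀ i, R i] M) = (n : Cardinal)) :
    Module.Free (∀ i, R i) M :=
  free_aux R M n hrank
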